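/- Let H be a fixed d × d real symmetric matrix of rank r, and let 1 ≤ l ≤ d. Let S be a random l × d matrix whose entries are i.i.d. standard Gaussian random variables (i.e. S is distributed according to the product of standard Gaussian measures over the l·d entries). Then with probability 1, rank(S H Sᵀ) = min(l, r). -/

import Mathlib

open Matrix MeasureTheory ProbabilityTheory


lemma meas_eval {ι : Type*} [Fintype ι] (p : MvPolynomial ι ℝ) :
    Measurable fun x : ι → ℝ => MvPolynomial.eval x p := by
  classical
  simp only [MvPolynomial.eval_eq]
  exact Finset.measurable_sum _ fun d _ =>
    (measurable_const.mul (Finset.measurable_prod _ fun i _ =>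
      (measurable_pi_apply i).pow_const _))

lemma gauss_poly_zero (p : Polynomial ℝ) (hp : p ≠ 0) :
    gaussianReal 0 1 {x | Polynomial.eval x p = 0} = 0 := by
  refine (gaussianReal_absolutelyContinuous 0 one_ne_zero) ?_
  exact Set.Finite.measure_zero (Polynomial.finite_setOf_isRoot hp) _


lemma gauss_mv_fin_zero : ∀ n (p : MvPolynomial (Fin n) ℝ), p ≠ 0 →
    (Measure.pi fun _ : Fin n => gaussianReal 0 1) {x | MvPolynomial.eval x p = 0} = 0 := by
  intro n
  induction n with
  | zero =>
    intro p hp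
    obtain ⟨a, rfl⟩ := MvPolynomial.C_surjective (Fin 0) p
    have ha : a ≠ 0 := fun h => hp (by simp [h])
    simp only [MvPolynomial.eval_C]
    rw [show {_x : Fin 0 → ℝ | a = 0} = ∅ from by ext x; simp [ha]]
    simp
  | succ n ih =>
    intro p hp
    set ν := gaussianReal 0 1 with hν
    set μn := Measure.pi fun _ : Fin n => ν with hμn
    have hmp := measurePreserving_piFinSuccAbove (fun _ : Fin (n+1) => ν) 0
    set φ := MeasurableEquiv.piFinSuccAbove (fun _ : Fin (n+1) => ℝ) 0 with hφ
    have hAm : MeasurableSet {x : Fin (n+1) → ℝ | MvPolynomial.eval x p = 0} :=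
      (meas_eval p) (measurableSet_singleton 0)
    have hBm : MeasurableSet (φ.symm ⁻¹' {x | MvPolynomial.eval x p = 0}) :=
      φ.symm.measurable hAm
    have key : (Measure.pi fun _ : Fin (n+1) => ν) {x | MvPolynomial.eval x p = 0}
        = (ν.prod μn) (φ.symm ⁻¹' {x | MvPolynomial.eval x p = 0}) := by
      rw [← hmp.measure_preimage hBm.nullMeasurableSet]
      congr 1
      ext x
      simp
    rw [key]
    -- describe the set
    have hset : φ.symm ⁻¹' {x | MvPolynomial.eval x p = 0}
        = {yt : ℝ × (Fin n → ℝ) | Polynomial.eval yt.1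
            (Polynomial.map (MvPolynomial.eval yt.2) (MvPolynomial.finSuccEquiv ℝ n p)) = 0} := by
      ext ⟨y, t⟩
      simp only [Set.mem_preimage, Set.mem_setOf_eq, MeasurableEquiv.piFinSuccAbove,
        MeasurableEquiv.symm_mk, MeasurableEquiv.coe_mk, Equiv.symm_symm]
      rw [show (φ.symm (y, t) : Fin (n+1) → ℝ) = Fin.cons y t from by
        simp [hφ, MeasurableEquiv.piFinSuccAbove, Fin.insertNthEquiv, Fin.insertNth_zero]]
      rw [MvPolynomial.eval_eq_eval_mv_eval']
    rw [hset]
    -- swap and use Fubini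
    have hq : MvPolynomial.finSuccEquiv ℝ n p ≠ 0 :=
      fun h => hp ((map_eq_zero_iff _ (AlgEquiv.injective _)).mp h)
    obtain ⟨m, hm⟩ : ∃ m, (MvPolynomial.finSuccEquiv ℝ n p).coeff m ≠ 0 := by
      by_contra h
      push_neg at h
      exact hq (Polynomial.ext fun m => by simp [h m])
    have hmeas2 : MeasurableSet {yt : ℝ × (Fin n → ℝ) | Polynomial.eval yt.1
        (Polynomial.map (MvPolynomial.eval yt.2) (MvPolynomial.finSuccEquiv ℝ n p)) = 0} := by
      rw [← hset]; exact hBm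
    rw [← Measure.prod_swap, Measure.map_apply measurable_swap hmeas2]
    have hswapm : MeasurableSet (Prod.swap ⁻¹' {yt : ℝ × (Fin n → ℝ) | Polynomial.eval yt.1
        (Polynomial.map (MvPolynomial.eval yt.2) (MvPolynomial.finSuccEquiv ℝ n p)) = 0}) :=
      measurable_swap hmeas2
    rw [MeasureTheory.Measure.measure_prod_null hswapm]
    have h0 : ∀ᵐ t ∂μn, MvPolynomial.eval t ((MvPolynomial.finSuccEquiv ℝ n p).coeff m) ≠ 0 := by
      have := ih ((MvPolynomial.finSuccEquiv ℝ n p).coeff m) hm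
      rw [MeasureTheory.ae_iff]
      simp only [ne_eq, not_not]
      exact this
    filter_upwards [h0] with t ht
    have hqt : Polynomial.map (MvPolynomial.eval t) (MvPolynomial.finSuccEquiv ℝ n p) ≠ 0 := by
      intro h
      apply ht
      have := congrArg (fun q => Polynomial.coeff q m) h
      simpa [Polynomial.coeff_map] using this
    have := gauss_poly_zero _ hqt
    simpa [Set.preimage, Set.mem_setOf_eq] using this

lemma gauss_mv_zero {ι : Type} [Fintype ι] (p : MvPolynomial ι ℝ) (hp : p ≠ 0) :
    (Measure.pi fun _ : ι => gaussianReal 0 1) {x | MvPolynomial.eval x p = 0} = 0 := by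
  classical
  set n := Fintype.card ι
  obtain ⟨e⟩ : Nonempty (Fin n ≃ ι) := ⟨(Fintype.equivFin ι).symm⟩
  have hmp := measurePreserving_arrowCongr' (fun _ : Fin n => gaussianReal 0 1)
    (fun _ : ι => gaussianReal 0 1) e (MeasurableEquiv.refl ℝ)
    (fun _ => MeasurePreserving.id _)
  have hAm : MeasurableSet {x : ι → ℝ | MvPolynomial.eval x p = 0} :=
    (meas_eval p) (measurableSet_singleton 0)
  rw [← hmp.measure_preimage hAm.nullMeasurableSet]
  have hpre : (MeasurableEquiv.arrowCongr' e (MeasurableEquiv.refl ℝ)) ⁻¹'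
      {x : ι → ℝ | MvPolynomial.eval x p = 0}
      = {x : Fin n → ℝ | MvPolynomial.eval x (MvPolynomial.rename e.symm p) = 0} := by
    ext x
    simp only [Set.mem_preimage, Set.mem_setOf_eq, MvPolynomial.eval_rename,
      MeasurableEquiv.arrowCongr', Equiv.arrowCongr', Equiv.arrowCongr,
      MeasurableEquiv.coe_mk, Equiv.coe_fn_mk]
    constructor <;> intro h <;> convert h using 2 <;> ext i <;> simp
  rw [hpre]
  exact gauss_mv_fin_zero n _ (fun h => hp (by
    have := MvPolynomial.rename_injective (R := ℝ) (e.symm : ι → Fin n) e.symm.injective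
    exact this (by simp [h])))

def rowSumEquiv (l d : ℕ) : (Fin d ⊕ (Fin l × Fin d)) ≃ (Fin (l+1) × Fin d) where
  toFun := Sum.elim (fun j => (0, j)) (fun p => (p.1.succ, p.2))
  invFun := fun p => Fin.cases (Sum.inl p.2) (fun i' => Sum.inr (i', p.2)) p.1
  left_inv := by rintro (j | ⟨i, j⟩) <;> simp
  right_inv := by
    rintro ⟨i, j⟩
    refine Fin.cases ?_ ?_ i <;> simp

lemma subsingleton_prob_eq {α : Type*} [MeasurableSpace α] [Subsingleton α]
    (μ ν : Measure α) [IsProbabilityMeasure μ] [IsProbabilityMeasure ν] : μ = ν := by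
  ext s hs
  rcases Set.eq_empty_or_nonempty s with rfl | ⟨a, ha⟩
  · simp
  · have hsu : s = Set.univ := by
      ext b
      simp only [Set.mem_univ, iff_true]
      rwa [Subsingleton.elim b a]
    rw [hsu, measure_univ, measure_univ]

lemma curry_mp (d : ℕ) : ∀ l, MeasurePreserving
    (fun (x : Fin l × Fin d → ℝ) (i : Fin l) (j : Fin d) => x (i, j))
    (Measure.pi fun _ : Fin l × Fin d => gaussianReal 0 1)
    (Measure.pi fun _ : Fin l => Measure.pi fun _ : Fin d => gaussianReal 0 1) := by
  intro l
  induction l with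
  | zero =>
    constructor
    · exact measurable_pi_lambda _ fun i =>
        measurable_pi_lambda _ fun j => measurable_pi_apply _
    · have hmeas : Measurable (fun (x : Fin 0 × Fin d → ℝ) (i : Fin 0) (j : Fin d) => x (i, j)) :=
        measurable_pi_lambda _ fun i => measurable_pi_lambda _ fun j => measurable_pi_apply _
      have : IsProbabilityMeasure ((Measure.pi fun _ : Fin 0 × Fin d => gaussianReal 0 1).map
          (fun (x : Fin 0 × Fin d → ℝ) (i : Fin 0) (j : Fin d) => x (i, j))) :=
        Measure.isProbabilityMeasure_map hmeas.aemeasurable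
      exact subsingleton_prob_eq _ _
  | succ l ih =>
    set ν := gaussianReal 0 1
    set νd := (Measure.pi fun _ : Fin d => ν) with hνd
    have h1 := measurePreserving_arrowCongr' (fun _ : Fin (l+1) × Fin d => ν)
      (fun _ : Fin d ⊕ (Fin l × Fin d) => ν) (rowSumEquiv l d).symm
      (MeasurableEquiv.refl ℝ) (fun _ => MeasurePreserving.id _)
    have h2 := measurePreserving_sumPiEquivProdPi
      (fun _ : Fin d ⊕ (Fin l × Fin d) => ν)
    have h3 := (MeasurePreserving.id νd).prod ih
    have h4 := (measurePreserving_piFinSuccAbove (fun _ : Fin (l+1) => νd) 0).symm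
    have hcomp := (h4.comp (h3.comp (h2.comp h1)))
    have heq : ((MeasurableEquiv.piFinSuccAbove (fun _ : Fin (l+1) => (Fin d → ℝ)) 0).symm ∘
        (Prod.map id (fun (x : Fin l × Fin d → ℝ) (i : Fin l) (j : Fin d) => x (i, j))) ∘
        (MeasurableEquiv.sumPiEquivProdPi (fun _ : Fin d ⊕ (Fin l × Fin d) => ℝ)) ∘
        (MeasurableEquiv.arrowCongr' (rowSumEquiv l d).symm (MeasurableEquiv.refl ℝ)))
        = (fun (x : Fin (l+1) × Fin d → ℝ) (i : Fin (l+1)) (j : Fin d) => x (i, j)) := by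
      funext x
      ext i j
      simp only [Function.comp_apply, MeasurableEquiv.piFinSuccAbove,
        MeasurableEquiv.sumPiEquivProdPi, MeasurableEquiv.arrowCongr',
        Equiv.arrowCongr', Equiv.arrowCongr, MeasurableEquiv.symm_mk,
        MeasurableEquiv.coe_mk, Equiv.symm_symm, Equiv.coe_fn_mk,
        Equiv.sumPiEquivProdPi, Prod.map, Fin.insertNthEquiv,
        Equiv.coe_fn_symm_mk, Fin.insertNth_zero, MeasurableEquiv.refl]
      refine Fin.cases ?_ ?_ i
      · simp [rowSumEquiv]
      · intro i'
        simp [rowSumEquiv]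
    rw [heq] at hcomp
    exact hcomp

lemma gauss_matrix_poly_zero (l d : ℕ) (q : MvPolynomial (Fin l × Fin d) ℝ) (hq : q ≠ 0) :
    (Measure.pi fun _ : Fin l => Measure.pi fun _ : Fin d => gaussianReal 0 1)
      {S : Fin l → Fin d → ℝ | MvPolynomial.eval (fun p => S p.1 p.2) q = 0} = 0 := by
  have hmeas : Measurable fun (S : Fin l → Fin d → ℝ) => MvPolynomial.eval
      (fun p : Fin l × Fin d => S p.1 p.2) q :=
    (meas_eval q).comp (measurable_pi_lambda _ fun p =>
      (measurable_pi_apply p.2).comp (measurable_pi_apply p.1))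
  have hAm : MeasurableSet {S : Fin l → Fin d → ℝ |
      MvPolynomial.eval (fun p => S p.1 p.2) q = 0} :=
    hmeas (measurableSet_singleton 0)
  rw [← (curry_mp d l).measure_preimage hAm.nullMeasurableSet]
  have hpre : (fun (x : Fin l × Fin d → ℝ) (i : Fin l) (j : Fin d) => x (i, j)) ⁻¹'
      {S : Fin l → Fin d → ℝ | MvPolynomial.eval (fun p => S p.1 p.2) q = 0}
      = {x : Fin l × Fin d → ℝ | MvPolynomial.eval x q = 0} := by
    ext x
    simp only [Set.mem_preimage, Set.mem_setOf_eq]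
  rw [hpre]
  exact gauss_mv_zero q hq

lemma rank_submatrix_le' {k l : ℕ} (A : Matrix (Fin l) (Fin l) ℝ) (ρ c : Fin k → Fin l) :
    (A.submatrix ρ c).rank ≤ A.rank := by
  have h1 : ((1 : Matrix (Fin l) (Fin l) ℝ).submatrix ρ (Equiv.refl (Fin l))) * A
      = A.submatrix ρ id := by
    rw [Matrix.one_submatrix_mul]
    rfl
  have h2 : (A.submatrix ρ id) * ((1 : Matrix (Fin l) (Fin l) ℝ).submatrix (Equiv.refl (Fin l)) c)
      = A.submatrix ρ c := by
    rw [Matrix.mul_submatrix_one]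
    simp [Matrix.submatrix_submatrix]
  calc (A.submatrix ρ c).rank
      = (((1 : Matrix (Fin l) (Fin l) ℝ).submatrix ρ (Equiv.refl (Fin l))) * A *
        ((1 : Matrix (Fin l) (Fin l) ℝ).submatrix (Equiv.refl (Fin l)) c)).rank := by
        rw [h1, h2]
    _ ≤ (((1 : Matrix (Fin l) (Fin l) ℝ).submatrix ρ (Equiv.refl (Fin l))) * A).rank :=
        Matrix.rank_mul_le_left _ _
    _ ≤ A.rank := Matrix.rank_mul_le_right _ _


lemma witness_exists {d : ℕ} (H : Matrix (Fin d) (Fin d) ℝ) (hsymm : H.IsSymm)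
    (r : ℕ) (hr : H.rank = r) (l k : ℕ) (hkl : k ≤ l) (hkr : k ≤ r) :
    ∃ S₀ : Fin l → Fin d → ℝ,
      ((Matrix.of S₀ * H * (Matrix.of S₀)ᵀ).submatrix (Fin.castLE hkl) (Fin.castLE hkl)).det
        ≠ 0 := by
  classical
  have hH : H.IsHermitian := by
    rw [Matrix.IsHermitian]
    ext i j
    rw [Matrix.conjTranspose_apply, star_trivial]
    exact congrFun (congrFun hsymm i) j
  set U : Matrix (Fin d) (Fin d) ℝ := ((Matrix.IsHermitian.eigenvectorUnitary hH : Matrix.unitaryGroup (Fin d) ℝ) : Matrix (Fin d) (Fin d) ℝ)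
    with hU
  set lam := hH.eigenvalues with hlam
  have hspec : H = U * Matrix.diagonal lam * Uᵀ := by
    have := hH.spectral_theorem
    have hst : (star (Matrix.IsHermitian.eigenvectorUnitary hH : Matrix (Fin d) (Fin d) ℝ))
        = Uᵀ := by
      rw [Matrix.star_eq_conjTranspose]
      ext i j
      rw [Matrix.conjTranspose_apply, star_trivial]
      rfl
    rw [Unitary.conjStarAlgAut_apply, hst] at this
    convert this using 3 <;> rfl
  have hUtU : Uᵀ * U = 1 := by
    have := (Matrix.mem_unitaryGroup_iff'.mp (Matrix.IsHermitian.eigenvectorUnitary hH).2)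
    rw [Matrix.star_eq_conjTranspose] at this
    rw [show (Uᵀ : Matrix (Fin d) (Fin d) ℝ) = Uᴴ from by
      ext i j; rw [Matrix.conjTranspose_apply, star_trivial]; rfl]
    exact this
  have hcard : r = Fintype.card {i // lam i ≠ 0} := by
    rw [← hr, hH.rank_eq_card_non_zero_eigs]
  obtain ⟨g⟩ : Nonempty (Fin k ↪ {i // lam i ≠ 0}) := by
    apply Function.Embedding.nonempty_iff_card_le.mpr
    simp [← hcard, hkr]
  set P : Matrix (Fin l) (Fin d) ℝ :=
    Matrix.of fun i j => if h : (i : ℕ) < k then (if (g ⟨i, h⟩ : Fin d) = j then 1 else 0)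
      else 0 with hP
  refine ⟨fun i j => (P * Uᵀ) i j, ?_⟩
  have hofS : Matrix.of (fun i j => (P * Uᵀ) i j) = P * Uᵀ := rfl
  rw [hofS]
  have hM : (P * Uᵀ) * H * (P * Uᵀ)ᵀ = P * Matrix.diagonal lam * Pᵀ := by
    rw [hspec, Matrix.transpose_mul, Matrix.transpose_transpose]
    have h1 : P * Uᵀ * (U * Matrix.diagonal lam * Uᵀ) * (U * Pᵀ)
        = P * ((Uᵀ * U) * Matrix.diagonal lam * (Uᵀ * U)) * Pᵀ := by
      simp only [Matrix.mul_assoc]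
    rw [h1, hUtU, Matrix.one_mul, Matrix.mul_one, Matrix.mul_assoc]
  rw [hM]
  have hsub : ((P * Matrix.diagonal lam * Pᵀ).submatrix (Fin.castLE hkl) (Fin.castLE hkl))
      = Matrix.diagonal (fun i : Fin k => lam (g i)) := by
    ext a b
    have hPa : ∀ (a : Fin k) (t : Fin d),
        P (Fin.castLE hkl a) t = if (g a : Fin d) = t then 1 else 0 := by
      intro a t
      have ha : ((Fin.castLE hkl a : Fin l) : ℕ) < k := a.isLt
      rw [hP]
      simp only [Matrix.of_apply, dif_pos ha]
      congr 2
    simp only [Matrix.submatrix_apply]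
    rw [Matrix.mul_apply]
    simp only [Matrix.transpose_apply, Matrix.mul_apply, hPa, ite_mul, mul_ite, one_mul,
      mul_one, zero_mul, mul_zero, Finset.sum_ite_eq, Finset.mem_univ, if_true]
    by_cases hab : a = b
    · subst hab
      simp
    · rw [Matrix.diagonal_apply_ne _ (fun hc => hab (g.injective (Subtype.ext hc))),
        Matrix.diagonal_apply_ne _ hab]
  rw [hsub, Matrix.det_diagonal]
  apply Finset.prod_ne_zero_iff.mpr
  intro i _
  exact (g i).2


section polyenc
variable {d l k : ℕ} (H : Matrix (Fin d) (Fin d) ℝ)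

noncomputable def Xmat (l d : ℕ) : Matrix (Fin l) (Fin d) (MvPolynomial (Fin l × Fin d) ℝ) :=
  Matrix.of fun i j => MvPolynomial.X (i, j)

noncomputable def rankPoly (H : Matrix (Fin d) (Fin d) ℝ) (l k : ℕ) :
    MvPolynomial (Fin l × Fin d) ℝ :=
  ∑ fp : (Fin k → Fin l) × (Fin k → Fin l),
    ((Xmat l d * H.map (MvPolynomial.C : ℝ →+* MvPolynomial (Fin l × Fin d) ℝ) * (Xmat l d)ᵀ).submatrix fp.1 fp.2).det ^ 2

lemma eval_rankPoly (x : Fin l × Fin d → ℝ) :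
    MvPolynomial.eval x (rankPoly H l k)
      = ∑ fp : (Fin k → Fin l) × (Fin k → Fin l),
        (((Matrix.of fun i j => x (i, j)) * H *
          (Matrix.of fun i j => x (i, j))ᵀ).submatrix fp.1 fp.2).det ^ 2 := by
  rw [rankPoly, map_sum]
  refine Finset.sum_congr rfl fun fp _ => ?_
  rw [map_pow]
  congr 1
  rw [RingHom.map_det]
  congr 1
  rw [RingHom.mapMatrix_apply, ← Matrix.submatrix_map]
  congr 1
  have h1 : (Xmat l d * H.map (MvPolynomial.C : ℝ →+* MvPolynomial (Fin l × Fin d) ℝ) * (Xmat l d)ᵀ).map (MvPolynomial.eval x)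
      = (Xmat l d).map (MvPolynomial.eval x) * (H.map MvPolynomial.C).map (MvPolynomial.eval x)
        * ((Xmat l d)ᵀ).map (MvPolynomial.eval x) := by
    rw [Matrix.map_mul (f := (MvPolynomial.eval x : MvPolynomial (Fin l × Fin d) ℝ →+* ℝ)),
      Matrix.map_mul (f := (MvPolynomial.eval x : MvPolynomial (Fin l × Fin d) ℝ →+* ℝ))]
  rw [h1]
  have h2 : (Xmat l d).map (MvPolynomial.eval x) = Matrix.of fun i j => x (i, j) := by
    ext i j; simp [Xmat]
  have h3 : (H.map MvPolynomial.C).map (MvPolynomial.eval x) = H := by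
    ext i j; simp
  have h4 : ((Xmat l d)ᵀ).map (MvPolynomial.eval x) = (Matrix.of fun i j => x (i, j))ᵀ := by
    ext i j; simp [Xmat]
  rw [h2, h3, h4]

end polyenc

/-- Let `H` be a fixed `d × d` real symmetric matrix of rank `r` and `1 ≤ l ≤ d`.
If `S` is a random `l × d` matrix with i.i.d. standard Gaussian entries (law given by
the product over all entries of the standard Gaussian measure on `ℝ`), then with
probability 1, `rank (S * H * Sᵀ) = min l r`. -/
theorem rank_sketched_hessian_ae {d : ℕ} (H : Matrix (Fin d) (Fin d) ℝ)
    (hsymm : H.IsSymm) (r : ℕ) (hr : H.rank = r)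
    (l : ℕ) (hl : 1 ≤ l) (hld : l ≤ d) :
    (Measure.pi fun _ : Fin l => Measure.pi fun _ : Fin d => gaussianReal 0 1)
      {S : Fin l → Fin d → ℝ | (Matrix.of S * H * (Matrix.of S)ᵀ).rank = min l r} = 1 := by
  classical
  set μ := (Measure.pi fun _ : Fin l => Measure.pi fun _ : Fin d => gaussianReal 0 1) with hμ
  set k := min l r with hk
  have hkl : k ≤ l := min_le_left _ _
  have hkr : k ≤ r := min_le_right _ _
  obtain ⟨S₀, hS₀⟩ := witness_exists H hsymm r hr l k hkl hkr
  set q := rankPoly H l k with hq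
  -- the polynomial is nonzero
  have hq0 : q ≠ 0 := by
    intro h
    have h1 := eval_rankPoly (k := k) H (fun p : Fin l × Fin d => S₀ p.1 p.2)
    rw [hq] at h
    rw [h] at h1
    simp only [map_zero] at h1
    have hof : (Matrix.of fun i j => (fun p : Fin l × Fin d => S₀ p.1 p.2) (i, j))
        = Matrix.of S₀ := rfl
    rw [hof] at h1
    have hpos : 0 < ∑ fp : (Fin k → Fin l) × (Fin k → Fin l),
        (((Matrix.of S₀) * H * (Matrix.of S₀)ᵀ).submatrix fp.1 fp.2).det ^ 2 := by
      refine Finset.sum_pos' (fun fp _ => sq_nonneg _)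
        ⟨(Fin.castLE hkl, Fin.castLE hkl), Finset.mem_univ _, ?_⟩
      exact pow_two_pos_of_ne_zero hS₀
    rw [← h1] at hpos
    exact lt_irrefl 0 hpos
  -- inclusion of events
  have hsub : {S : Fin l → Fin d → ℝ | MvPolynomial.eval (fun p : Fin l × Fin d => S p.1 p.2) q ≠ 0}
      ⊆ {S : Fin l → Fin d → ℝ | (Matrix.of S * H * (Matrix.of S)ᵀ).rank = min l r} := by
    intro S hS
    simp only [Set.mem_setOf_eq] at hS ⊢
    rw [hq, eval_rankPoly] at hS
    have hof : (Matrix.of fun i j => (fun p : Fin l × Fin d => S p.1 p.2) (i, j))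
        = Matrix.of S := rfl
    rw [hof] at hS
    obtain ⟨fp, hfp⟩ : ∃ fp : (Fin k → Fin l) × (Fin k → Fin l),
        (((Matrix.of S) * H * (Matrix.of S)ᵀ).submatrix fp.1 fp.2).det ≠ 0 := by
      by_contra hcon
      push_neg at hcon
      exact hS (Finset.sum_eq_zero fun fp _ => by rw [hcon fp]; ring)
    refine le_antisymm ?_ ?_
    · refine le_min ?_ ?_
      · have := Matrix.rank_le_card_height (Matrix.of S * H * (Matrix.of S)ᵀ)
        simpa using this
      · rw [← hr]
        exact (Matrix.rank_mul_le_left _ _).trans (Matrix.rank_mul_le_right _ _)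
    · have hunit : IsUnit (((Matrix.of S) * H * (Matrix.of S)ᵀ).submatrix fp.1 fp.2) :=
        (Matrix.isUnit_iff_isUnit_det _).mpr (isUnit_iff_ne_zero.mpr hfp)
      have hrk := Matrix.rank_of_isUnit _ hunit
      have hle := rank_submatrix_le' ((Matrix.of S) * H * (Matrix.of S)ᵀ) fp.1 fp.2
      rw [hrk] at hle
      have hk2 : k ≤ (Matrix.of S * H * (Matrix.of S)ᵀ).rank := by simpa using hle
      exact hk2
  -- measure computation
  have h0 : μ {S : Fin l → Fin d → ℝ |
      MvPolynomial.eval (fun p : Fin l × Fin d => S p.1 p.2) q = 0} = 0 :=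
    gauss_matrix_poly_zero l d q hq0
  have hmeas : Measurable fun (S : Fin l → Fin d → ℝ) => MvPolynomial.eval
      (fun p : Fin l × Fin d => S p.1 p.2) q :=
    (meas_eval q).comp (measurable_pi_lambda _ fun p =>
      (measurable_pi_apply p.2).comp (measurable_pi_apply p.1))
  have hAm : MeasurableSet {S : Fin l → Fin d → ℝ |
      MvPolynomial.eval (fun p : Fin l × Fin d => S p.1 p.2) q = 0} :=
    hmeas (measurableSet_singleton 0)
  have hprob : IsProbabilityMeasure μ := by rw [hμ]; infer_instance
  have h1 : μ {S : Fin l → Fin d → ℝ |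
      MvPolynomial.eval (fun p : Fin l × Fin d => S p.1 p.2) q ≠ 0} = 1 := by
    have hcompl : {S : Fin l → Fin d → ℝ |
        MvPolynomial.eval (fun p : Fin l × Fin d => S p.1 p.2) q ≠ 0}
        = {S : Fin l → Fin d → ℝ |
          MvPolynomial.eval (fun p : Fin l × Fin d => S p.1 p.2) q = 0}ᶜ := rfl
    rw [hcompl, prob_compl_eq_one_sub hAm, h0]
    simp
  refine le_antisymm prob_le_one ?_
  calc (1 : ENNReal) = μ {S : Fin l → Fin d → ℝ |
        MvPolynomial.eval (fun p : Fin l × Fin d => S p.1 p.2) q ≠ 0} := h1.symm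
    _ ≤ μ {S : Fin l → Fin d → ℝ | (Matrix.of S * H * (Matrix.of S)ᵀ).rank = min l r} :=
        measure_mono hsub
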